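/- Let X be a normal Hausdorff space, let F be a cusco map from X to ℝ, and let W ⊆ X × ℝ be an open set such that the graph of F is contained in W. Then there exists a continuous function g : X → ℝ whose graph is contained in W. -/

import Mathlib

open Set Topology TopologicalSpace

/-- The set of values of a set-valued map (identified with its graph) at a point. -/
def valuesAt {X : Type*} (F : Set (X × ℝ)) (x : X) : Set ℝ := {y | (x, y) ∈ F}

/-- A set-valued map (identified with its graph) is cusco: upper semicontinuous at every
point, with nonempty compact convex values. -/
def IsCusco {X : Type*} [TopologicalSpace X] (F : Set (X × ℝ)) : Prop :=
  (∀ x : X, ∀ V : Set ℝ, IsOpen V → valuesAt F x ⊆ V →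
    ∃ U : Set X, IsOpen U ∧ x ∈ U ∧ ∀ u ∈ U, valuesAt F u ⊆ V) ∧
  (∀ x : X, (valuesAt F x).Nonempty ∧ IsCompact (valuesAt F x) ∧ Convex ℝ (valuesAt F x))

/-- A minimal cusco map, i.e. a cusco map containing no proper cusco submap. -/
def IsMinimalCusco {X : Type*} [TopologicalSpace X] (F : Set (X × ℝ)) : Prop :=
  IsCusco F ∧ ∀ G : Set (X × ℝ), IsCusco G → G ⊆ F → G = F

/-- `L(X)`: all cusco maps from `X` to `ℝ`. -/
def LSet (X : Type*) [TopologicalSpace X] : Set (Set (X × ℝ)) := {F | IsCusco F}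

/-- `L₀(X)`: cusco maps that are single-valued at each isolated point. -/
def L0Set (X : Type*) [TopologicalSpace X] : Set (Set (X × ℝ)) :=
  {F | IsCusco F ∧ ∀ x : X, IsOpen ({x} : Set X) → ∃ y : ℝ, valuesAt F x = {y}}

/-- `MC(X)`: all minimal cusco maps from `X` to `ℝ`. -/
def MCSet (X : Type*) [TopologicalSpace X] : Set (Set (X × ℝ)) := {F | IsMinimalCusco F}

/-- The upper Vietoris topology on a family of subsets of `X × ℝ`. -/
def upperVietoris {X : Type*} [TopologicalSpace X] (S : Set (Set (X × ℝ))) :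
    TopologicalSpace S :=
  .generateFrom {U | ∃ W : Set (X × ℝ), IsOpen W ∧ U = {A : S | (A : Set (X × ℝ)) ⊆ W}}

/-- The Vietoris topology on a family of subsets of `X × ℝ`. -/
def vietoris {X : Type*} [TopologicalSpace X] (S : Set (Set (X × ℝ))) :
    TopologicalSpace S :=
  .generateFrom
    ({U | ∃ W : Set (X × ℝ), IsOpen W ∧ U = {A : S | (A : Set (X × ℝ)) ⊆ W}} ∪
     {U | ∃ W : Set (X × ℝ), IsOpen W ∧ U = {A : S | ((A : Set (X × ℝ)) ∩ W).Nonempty}})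

/-- The graph of a function `X → ℝ`. -/
def graphOf {X : Type*} (f : X → ℝ) : Set (X × ℝ) := {p | p.2 = f p.1}

/-- `X` is countably compact: every countable open cover has a finite subcover. -/
def CountablyCompact (X : Type*) [TopologicalSpace X] : Prop :=
  ∀ U : ℕ → Set X, (∀ n, IsOpen (U n)) → (⋃ n, U n) = Set.univ →
    ∃ t : Finset ℕ, (⋃ n ∈ t, U n) = Set.univ

section Aux

variable {X : Type*} [TopologicalSpace X] {F W : Set (X × ℝ)}

lemma urysohn_step [NormalSpace X] (u v : X → ℝ) (hu : UpperSemicontinuous u)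
    (hv : LowerSemicontinuous v) (huv : ∀ x, u x ≤ v x) (ε : ℝ) (hε : 0 < ε)
    (hub : ∀ x, u x ≤ ε) (hvb : ∀ x, -ε ≤ v x) :
    ∃ h : X → ℝ, Continuous h ∧ (∀ x, |h x| ≤ ε / 3) ∧
      ∀ x, u x - 2 * ε / 3 ≤ h x ∧ h x ≤ v x + 2 * ε / 3 := by
  have hAc : IsClosed (u ⁻¹' Ici (ε / 3)) := hu.isClosed_preimage _
  have hBc : IsClosed (v ⁻¹' Iic (-(ε / 3))) := hv.isClosed_preimage _
  have hd : Disjoint (v ⁻¹' Iic (-(ε / 3))) (u ⁻¹' Ici (ε / 3)) := by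
    rw [Set.disjoint_left]
    intro x hxB hxA
    have h1 : (ε / 3 : ℝ) ≤ u x := hxA
    have h2 : v x ≤ -(ε / 3) := hxB
    nlinarith [huv x]
  obtain ⟨f, hf0, hf1, hf01⟩ := exists_continuous_zero_one_of_isClosed hBc hAc hd
  refine ⟨fun x => ε / 3 * (2 * f x - 1), by continuity, ?_, ?_⟩
  · intro x
    have := hf01 x
    rw [abs_le]
    constructor <;> nlinarith [this.1, this.2]
  · intro x
    have h01 := hf01 x
    constructor
    · by_cases hx : x ∈ u ⁻¹' Ici (ε / 3)
      · have h1 : f x = 1 := hf1 hx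
        have := hub x; simp only [h1]; nlinarith
      · have : u x < ε / 3 := lt_of_not_ge hx
        nlinarith [h01.1]
    · by_cases hx : x ∈ v ⁻¹' Iic (-(ε / 3))
      · have h0 : f x = 0 := hf0 hx
        have := hvb x; simp only [h0]; nlinarith
      · have : -(ε / 3) < v x := lt_of_not_ge hx
        nlinarith [h01.2]

lemma katetov_tong [NormalSpace X] (u v : X → ℝ) (hu : UpperSemicontinuous u)
    (hv : LowerSemicontinuous v) (huv : ∀ x, u x ≤ v x) (M : ℝ)
    (hub : ∀ x, |u x| ≤ M) (hvb : ∀ x, |v x| ≤ M) :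
    ∃ g : X → ℝ, Continuous g ∧ ∀ x, u x ≤ g x ∧ g x ≤ v x := by
  set M' : ℝ := max M 1 with hM'
  have hM'1 : (1:ℝ) ≤ M' := le_max_right _ _
  have hM'0 : (0:ℝ) < M' := lt_of_lt_of_le one_pos hM'1
  set ε : ℕ → ℝ := fun n => M' * (2/3) ^ n with hεdef
  have hεpos : ∀ n, 0 < ε n := fun n => mul_pos hM'0 (pow_pos (by norm_num) n)
  have step : ∀ (n : ℕ) (G : X → ℝ), Continuous G →
      (∀ x, u x - ε n ≤ G x ∧ G x ≤ v x + ε n) →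
      ∃ G' : X → ℝ, Continuous G' ∧ (∀ x, u x - ε (n+1) ≤ G' x ∧ G' x ≤ v x + ε (n+1)) ∧
        ∀ x, |G' x - G x| ≤ ε n / 3 := by
    intro n G hG hGb
    obtain ⟨h, hhc, hhb, hh⟩ := urysohn_step (fun x => u x - G x) (fun x => v x - G x)
      (hu.add (hG.neg.upperSemicontinuous)) (hv.add (hG.neg.lowerSemicontinuous))
      (fun x => by have := huv x; linarith) (ε n) (hεpos n)
      (fun x => by have := (hGb x).1; linarith)
      (fun x => by have := (hGb x).2; linarith)
    refine ⟨fun x => G x + h x, hG.add hhc, fun x => ?_, fun x => by simpa using hhb x⟩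
    have h1 := (hh x).1
    have h2 := (hh x).2
    have hε1 : ε (n+1) = 2 * ε n / 3 := by
      simp only [hεdef, pow_succ]; ring
    rw [hε1]
    constructor <;> simp only at h1 h2 ⊢ <;> linarith
  choose! step' hstC hstB hstD using step
  set G : ℕ → X → ℝ := fun n =>
    Nat.rec (motive := fun _ => X → ℝ) (fun _ => 0) (fun n Gn => step' n Gn) n with hGdef
  have hGsucc : ∀ n, G (n+1) = step' n (G n) := fun n => rfl
  have key : ∀ n, Continuous (G n) ∧ ∀ x, u x - ε n ≤ G n x ∧ G n x ≤ v x + ε n := by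
    intro n
    induction n with
    | zero =>
      refine ⟨continuous_const, fun x => ?_⟩
      have h1 := abs_le.mp (hub x)
      have h2 := abs_le.mp (hvb x)
      have hε0 : ε 0 = M' := by simp [hεdef]
      have hMM' : M ≤ M' := le_max_left _ _
      constructor
      · show u x - ε 0 ≤ 0
        rw [hε0]; linarith [h1.2]
      · show (0:ℝ) ≤ v x + ε 0
        rw [hε0]; linarith [h2.1]
    | succ n ih =>
      rw [hGsucc n]
      exact ⟨hstC n (G n) ih.1 ih.2, hstB n (G n) ih.1 ih.2⟩
  have hclose : ∀ n x, ‖G (n+1) x - G n x‖ ≤ ε n / 3 := by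
    intro n x
    rw [hGsucc n]
    exact hstD n (G n) (key n).1 (key n).2 x
  have hsum : Summable (fun n => ε n / 3) := by
    apply Summable.div_const
    exact (summable_geometric_of_lt_one (by norm_num) (by norm_num)).mul_left M'
  have huni := tendstoUniformly_tsum_nat hsum (fun n x => hclose n x)
  have hpartial : (fun (t : ℕ) (x : X) => ∑ n ∈ Finset.range t, (G (n+1) x - G n x)) =
      fun t x => G t x := by
    funext t x
    rw [Finset.sum_range_sub (fun n => G n x)]
    simp [hGdef]
  rw [hpartial] at huni
  refine ⟨fun x => ∑' n, (G (n+1) x - G n x), ?_, fun x => ?_⟩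
  · exact huni.continuous (Filter.Eventually.of_forall fun t => (key t).1).frequently
  · have hptw : Filter.Tendsto (fun t => G t x) Filter.atTop
        (𝓝 (∑' n, (G (n+1) x - G n x))) := huni.tendsto_at x
    have hεlim : Filter.Tendsto ε Filter.atTop (𝓝 0) := by
      have := tendsto_pow_atTop_nhds_zero_of_lt_one (by norm_num : (0:ℝ) ≤ 2/3)
        (by norm_num : (2/3:ℝ) < 1)
      simpa [hεdef] using this.const_mul M'
    constructor
    · have h1 : Filter.Tendsto (fun t => u x - ε t) Filter.atTop (𝓝 (u x)) := by
        simpa using (tendsto_const_nhds (x := u x)).sub hεlim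
      exact le_of_tendsto_of_tendsto' h1 hptw fun t => (key t).2 x |>.1
    · have h1 : Filter.Tendsto (fun t => v x + ε t) Filter.atTop (𝓝 (v x)) := by
        simpa using (tendsto_const_nhds (x := v x)).add hεlim
      exact le_of_tendsto_of_tendsto' hptw h1 fun t => (key t).2 x |>.2

lemma valuesAt_open (hW : IsOpen W) (x : X) : IsOpen (valuesAt W x) :=
  hW.preimage (Continuous.prodMk_right x)

lemma cusco_sInf_mem (hF : IsCusco F) (x : X) : sInf (valuesAt F x) ∈ valuesAt F x :=
  (hF.2 x).2.1.sInf_mem (hF.2 x).1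

lemma cusco_sSup_mem (hF : IsCusco F) (x : X) : sSup (valuesAt F x) ∈ valuesAt F x :=
  (hF.2 x).2.1.sSup_mem (hF.2 x).1

lemma cusco_valuesAt_eq_Icc (hF : IsCusco F) (x : X) :
    valuesAt F x = Icc (sInf (valuesAt F x)) (sSup (valuesAt F x)) := by
  apply Subset.antisymm
  · intro y hy
    exact ⟨csInf_le (hF.2 x).2.1.bddBelow hy, le_csSup (hF.2 x).2.1.bddAbove hy⟩
  · exact (convex_iff_ordConnected.mp (hF.2 x).2.2).out (cusco_sInf_mem hF x)
      (cusco_sSup_mem hF x)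

lemma cusco_usc_sSup (hF : IsCusco F) :
    UpperSemicontinuous (fun x => sSup (valuesAt F x)) := by
  intro x c hc
  set c' := (sSup (valuesAt F x) + c) / 2 with hc'
  have h1 : sSup (valuesAt F x) < c' := by simp only [hc']; linarith
  have h2 : c' < c := by simp only [hc']; linarith
  obtain ⟨U, hUo, hxU, hU⟩ := hF.1 x (Iio c') isOpen_Iio
    (fun y hy => lt_of_le_of_lt (le_csSup (hF.2 x).2.1.bddAbove hy) h1)
  filter_upwards [hUo.mem_nhds hxU] with u hu
  exact lt_of_le_of_lt (csSup_le (hF.2 u).1 fun y hy => le_of_lt (hU u hu hy)) h2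

lemma cusco_lsc_sInf (hF : IsCusco F) :
    LowerSemicontinuous (fun x => sInf (valuesAt F x)) := by
  intro x c hc
  set c' := (c + sInf (valuesAt F x)) / 2 with hc'
  have h1 : c' < sInf (valuesAt F x) := by simp only [hc']; linarith
  have h2 : c < c' := by simp only [hc']; linarith
  obtain ⟨U, hUo, hxU, hU⟩ := hF.1 x (Ioi c') isOpen_Ioi
    (fun y hy => lt_of_lt_of_le h1 (csInf_le (hF.2 x).2.1.bddBelow hy))
  filter_upwards [hUo.mem_nhds hxU] with u hu
  exact lt_of_lt_of_le h2 (le_csInf (hF.2 u).1 fun y hy => le_of_lt (hU u hu hy))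

lemma lemmaE (hF : IsCusco F) (hW : IsOpen W) (hFW : F ⊆ W)
    (hWb : ∀ p ∈ W, |p.2| < 1) :
    ∃ v : X → ℝ, LowerSemicontinuous v ∧ (∀ x, sSup (valuesAt F x) < v x ∧ v x ≤ 1) ∧
      ∀ x y, sInf (valuesAt F x) ≤ y → y < v x → (x, y) ∈ W := by
  set q : X → ℝ := fun x => sInf (valuesAt F x) with hqdef
  set p : X → ℝ := fun x => sSup (valuesAt F x) with hpdef
  set A : X → Set ℝ := fun x => {y | y ≤ 1 ∧ Ico (q x) y ⊆ valuesAt W x} with hAdef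
  have hqF : ∀ x, q x ∈ valuesAt F x := fun x => cusco_sInf_mem hF x
  have hpF : ∀ x, p x ∈ valuesAt F x := fun x => cusco_sSup_mem hF x
  have hq1 : ∀ x, |q x| < 1 := fun x => hWb (x, q x) (hFW (hqF x))
  have hp1 : ∀ x, |p x| < 1 := fun x => hWb (x, p x) (hFW (hpF x))
  have hqp : ∀ x, q x ≤ p x := fun x =>
    csInf_le_csSup (hF.2 x).1 (hF.2 x).2.1.bddBelow (hF.2 x).2.1.bddAbove
  have hAne : ∀ x, (A x).Nonempty :=
    fun x => ⟨q x, le_of_lt (abs_lt.mp (hq1 x)).2, by simp⟩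
  have hAbdd : ∀ x, BddAbove (A x) := fun x => ⟨1, fun y hy => hy.1⟩
  set v : X → ℝ := fun x => sSup (A x) with hvdef
  have hv1 : ∀ x, v x ≤ 1 := fun x => csSup_le (hAne x) fun y hy => hy.1
  have hkey : ∀ x y, q x ≤ y → y < v x → (x, y) ∈ W := by
    intro x y hqy hyv
    obtain ⟨z, hzA, hyz⟩ := exists_lt_of_lt_csSup (hAne x) hyv
    exact hzA.2 ⟨hqy, hyz⟩
  have hIccW : ∀ x, Icc (q x) (p x) ⊆ valuesAt W x := by
    intro x y hy
    rw [hqdef, hpdef, ← cusco_valuesAt_eq_Icc hF x] at hy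
    exact hFW hy
  have hpv : ∀ x, p x < v x := by
    intro x
    have hop : IsOpen (valuesAt W x) := valuesAt_open hW x
    have hpW : p x ∈ valuesAt W x := hFW (hpF x)
    obtain ⟨ε, hε, hball⟩ := Metric.isOpen_iff.mp hop _ hpW
    have hzA : min (p x + ε) 1 ∈ A x := by
      refine ⟨min_le_right _ _, fun y hy => ?_⟩
      rcases le_or_gt y (p x) with h | h
      · exact hIccW x ⟨hy.1, h⟩
      · apply hball
        rw [Metric.mem_ball, Real.dist_eq, abs_of_pos (by linarith)]
        have : y < p x + ε := lt_of_lt_of_le hy.2 (min_le_left _ _)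
        linarith
    calc p x < min (p x + ε) 1 := lt_min (by linarith) (abs_lt.mp (hp1 x)).2
    _ ≤ v x := le_csSup (hAbdd x) hzA
  have hlsc : LowerSemicontinuous v := by
    intro x c hc
    obtain ⟨z, hzA, hcz⟩ := exists_lt_of_lt_csSup (hAne x) hc
    set z' := (c + z) / 2 with hz'
    have hcz' : c < z' := by simp only [hz']; linarith
    have hz'z : z' < z := by simp only [hz']; linarith
    set b := max z' (p x) with hb
    have hKW : Icc (q x) b ⊆ valuesAt W x := by
      intro y hy
      rcases le_or_gt y (p x) with h | h
      · exact hIccW x ⟨hy.1, h⟩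
      · have hyz' : y ≤ z' := by
          rcases max_cases z' (p x) with ⟨heq, _⟩ | ⟨heq, hle⟩
          · rw [hb, heq] at hy; exact hy.2
          · rw [hb, heq] at hy; linarith [hy.2]
        exact hzA.2 ⟨hy.1, lt_of_le_of_lt hyz' hz'z⟩
    have hsing : ({x} ×ˢ Icc (q x) b : Set (X × ℝ)) ⊆ W := by
      rintro ⟨x', y⟩ ⟨hx', hy⟩
      rw [mem_singleton_iff] at hx'
      subst hx'
      exact hKW hy
    obtain ⟨U₁, V, hU₁o, hVo, hxU₁, hKV, hUV⟩ :=
      generalized_tube_lemma isCompact_singleton isCompact_Icc hW hsing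
    obtain ⟨δ, hδ, hthick⟩ := isCompact_Icc.exists_thickening_subset_open hVo hKV
    have hqb : q x ≤ b := le_trans (hqp x) (le_max_right _ _)
    have hIoo : Ioo (q x - δ) (b + δ) ⊆ V := by
      intro y hy
      apply hthick
      rw [Metric.mem_thickening_iff]
      rcases lt_or_ge y (q x) with h | h
      · exact ⟨q x, ⟨le_refl _, hqb⟩, by rw [Real.dist_eq, abs_of_neg (by linarith)]; linarith [hy.1]⟩
      · rcases le_or_gt y b with h2 | h2
        · exact ⟨y, ⟨h, h2⟩, by rw [dist_self]; exact hδ⟩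
        · exact ⟨b, ⟨hqb, le_refl _⟩, by rw [Real.dist_eq, abs_of_pos (by linarith)]; linarith [hy.2]⟩
    obtain ⟨U₂, hU₂o, hxU₂, hU₂⟩ := hF.1 x (Ioo (q x - δ) (b + δ)) isOpen_Ioo (by
      intro y hy
      rw [cusco_valuesAt_eq_Icc hF x] at hy
      constructor
      · calc q x - δ < q x := by linarith
        _ ≤ y := hy.1
      · calc y ≤ p x := hy.2
        _ ≤ b := le_max_right _ _
        _ < b + δ := by linarith)
    filter_upwards [(hU₁o.inter hU₂o).mem_nhds ⟨singleton_subset_iff.mp hxU₁, hxU₂⟩] with u hu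
    have hyA : min (b + δ) 1 ∈ A u := by
      refine ⟨min_le_right _ _, fun y hy => ?_⟩
      have hquV : q u ∈ Ioo (q x - δ) (b + δ) := hU₂ u hu.2 (hqF u)
      have hyV : y ∈ Ioo (q x - δ) (b + δ) :=
        ⟨lt_of_lt_of_le hquV.1 hy.1, lt_of_lt_of_le hy.2 (min_le_left _ _)⟩
      exact hUV ⟨hu.1, hIoo hyV⟩
    have hcy : c < min (b + δ) 1 := by
      apply lt_min
      · calc c < z' := hcz'
        _ ≤ b := le_max_left _ _
        _ < b + δ := by linarith
      · exact lt_of_lt_of_le hc (hv1 x)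
    exact lt_of_lt_of_le hcy (le_csSup (hAbdd u) hyA)
  exact ⟨v, hlsc, fun x => ⟨hpv x, hv1 x⟩, hkey⟩

lemma valuesAt_reflect (S : Set (X × ℝ)) (x : X) :
    valuesAt ((fun p : X × ℝ => (p.1, -p.2)) ⁻¹' S) x = -(valuesAt S x) := by
  ext y; simp [valuesAt, Set.mem_neg]

lemma sSup_neg_real (s : Set ℝ) : sSup (-s) = -sInf s := by
  rw [Real.sInf_def, neg_neg]

lemma sInf_neg_real (s : Set ℝ) : sInf (-s) = -sSup s := by
  rw [Real.sInf_def, neg_neg]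

lemma cusco_reflect (hF : IsCusco F) :
    IsCusco ((fun p : X × ℝ => (p.1, -p.2)) ⁻¹' F) := by
  constructor
  · intro x V hVo hsub
    rw [valuesAt_reflect] at hsub
    obtain ⟨U, hUo, hxU, hU⟩ := hF.1 x (-V) hVo.neg (by
      intro y hy
      rw [Set.mem_neg]
      exact hsub (by rwa [Set.mem_neg, neg_neg]))
    refine ⟨U, hUo, hxU, fun u hu => ?_⟩
    rw [valuesAt_reflect]
    intro y hy
    rw [Set.mem_neg] at hy
    have := hU u hu hy
    rwa [Set.mem_neg, neg_neg] at this
  · intro x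
    rw [valuesAt_reflect]
    exact ⟨Set.nonempty_neg.mpr (hF.2 x).1, (hF.2 x).2.1.neg, (hF.2 x).2.2.neg⟩

lemma lemmaD [NormalSpace X] (hF : IsCusco F) (hW : IsOpen W) (hFW : F ⊆ W)
    (hWb : ∀ p ∈ W, |p.2| < 1) :
    ∃ g : X → ℝ, Continuous g ∧ ∀ x, (x, g x) ∈ W := by
  obtain ⟨v, hvlsc, hvb, hvkey⟩ := lemmaE hF hW hFW hWb
  set Ft : Set (X × ℝ) := (fun p : X × ℝ => (p.1, -p.2)) ⁻¹' F with hFtdef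
  set Wt : Set (X × ℝ) := (fun p : X × ℝ => (p.1, -p.2)) ⁻¹' W with hWtdef
  have hWto : IsOpen Wt := hW.preimage (continuous_fst.prodMk continuous_snd.neg)
  have hFtWt : Ft ⊆ Wt := fun r hr => hFW hr
  have hWtb : ∀ r ∈ Wt, |r.2| < 1 := by
    intro r hr
    have := hWb _ hr
    simpa using this
  obtain ⟨vt, hvtlsc, hvtb, hvtkey⟩ := lemmaE (cusco_reflect hF) hWto hFtWt hWtb
  set q : X → ℝ := fun x => sInf (valuesAt F x) with hqdef
  set p : X → ℝ := fun x => sSup (valuesAt F x) with hpdef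
  set w : X → ℝ := fun x => -vt x with hwdef
  have hrefl_sup : ∀ x, sSup (valuesAt Ft x) = -q x := fun x => by
    rw [hFtdef, valuesAt_reflect, hqdef, sSup_neg_real]
  have hrefl_inf : ∀ x, sInf (valuesAt Ft x) = -p x := fun x => by
    rw [hFtdef, valuesAt_reflect, hpdef, sInf_neg_real]
  have hwq : ∀ x, w x < q x := by
    intro x
    have h := (hvtb x).1
    rw [hrefl_sup] at h
    simp only [hwdef]
    linarith
  have hw1 : ∀ x, -1 ≤ w x := by
    intro x
    have := (hvtb x).2
    simp only [hwdef]
    linarith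
  have hwkey : ∀ x y, y ≤ p x → w x < y → (x, y) ∈ W := by
    intro x y h1 h2
    simp only [hwdef] at h2
    have h3 := hvtkey x (-y) (by rw [hrefl_inf]; linarith) (by linarith)
    rw [hWtdef] at h3
    simpa using h3
  have husc : UpperSemicontinuous w := by
    intro x c hc
    simp only [hwdef] at hc
    have hcx : -c < vt x := by linarith
    filter_upwards [hvtlsc x (-c) hcx] with u hu
    simp only [hwdef]
    linarith
  have hqF : ∀ x, q x ∈ valuesAt F x := fun x => cusco_sInf_mem hF x
  have hpF : ∀ x, p x ∈ valuesAt F x := fun x => cusco_sSup_mem hF x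
  have hq1 : ∀ x, |q x| < 1 := fun x => hWb (x, q x) (hFW (hqF x))
  have hp1 : ∀ x, |p x| < 1 := fun x => hWb (x, p x) (hFW (hpF x))
  have hqp : ∀ x, q x ≤ p x := fun x =>
    csInf_le_csSup (hF.2 x).1 (hF.2 x).2.1.bddBelow (hF.2 x).2.1.bddAbove
  obtain ⟨g₁, hg₁c, hg₁⟩ := katetov_tong w q husc (by rw [hqdef]; exact cusco_lsc_sInf hF)
    (fun x => le_of_lt (hwq x)) 1
    (fun x => abs_le.mpr ⟨hw1 x, le_trans (le_of_lt (hwq x)) (le_of_lt (abs_lt.mp (hq1 x)).2)⟩)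
    (fun x => le_of_lt (hq1 x))
  obtain ⟨g₂, hg₂c, hg₂⟩ := katetov_tong p v (by rw [hpdef]; exact cusco_usc_sSup hF) hvlsc
    (fun x => le_of_lt (hvb x).1) 1
    (fun x => le_of_lt (hp1 x))
    (fun x => abs_le.mpr ⟨by
      have h1 : p x < v x := (hvb x).1
      linarith [(abs_lt.mp (hp1 x)).1], (hvb x).2⟩)
  have hvkey' : ∀ x y, q x ≤ y → y < v x → (x, y) ∈ W := hvkey
  have hpv : ∀ x, p x < v x := fun x => (hvb x).1
  clear_value w q p
  refine ⟨fun x => (g₁ x + g₂ x) / 2, by continuity, fun x => ?_⟩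
  show (x, (g₁ x + g₂ x) / 2) ∈ W
  rcases le_or_gt (q x) ((g₁ x + g₂ x) / 2) with h | h
  · refine hvkey' x _ h ?_
    have h1 := (hg₁ x).2
    have h2 := (hg₂ x).2
    have h3 : p x < v x := hpv x
    have h4 := hqp x
    linarith
  · refine hwkey x _ (by linarith [hqp x]) ?_
    have h1 := (hg₁ x).1
    have h2 := (hg₂ x).1
    have h3 := hwq x
    have h4 := hqp x
    linarith

end Aux

/-- If `X` is normal Hausdorff, `F` is a cusco map from `X` to `ℝ` and `W` is open with
`graph F ⊆ W`, then some continuous `g : X → ℝ` has its graph contained in `W`. -/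
theorem exists_continuous_graph_subset {X : Type*} [TopologicalSpace X] [T2Space X]
    [NormalSpace X] (F W : Set (X × ℝ)) (hF : IsCusco F) (hW : IsOpen W) (hFW : F ⊆ W) :
    ∃ g : X → ℝ, Continuous g ∧ graphOf g ⊆ W := by
  classical
  set φ : ℝ → ℝ := fun t => t / (1 + |t|) with hφdef
  have hpos : ∀ t : ℝ, (0:ℝ) < 1 + |t| := fun t => by positivity
  have hφc : Continuous φ := continuous_id.div (by continuity) (fun t => (hpos t).ne')
  have hφabs : ∀ t, |φ t| = |t| / (1 + |t|) := by
    intro t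
    simp only [hφdef]
    rw [abs_div, abs_of_pos (hpos t)]
  have hφlt : ∀ t, |φ t| < 1 := fun t => by
    rw [hφabs t, div_lt_one (hpos t)]; linarith [abs_nonneg t]
  have hψφ : ∀ t, φ t / (1 - |φ t|) = t := by
    intro t
    have h1 : 1 - |φ t| = 1 / (1 + |t|) := by
      rw [hφabs t]
      field_simp; ring
    rw [h1]
    simp only [hφdef]
    field_simp
  set F' : Set (X × ℝ) := (fun r : X × ℝ => (r.1, φ r.2)) '' F with hF'def
  set W' : Set (X × ℝ) := {r : X × ℝ | |r.2| < 1 ∧ (r.1, r.2 / (1 - |r.2|)) ∈ W} with hW'def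
  have hvals : ∀ x, valuesAt F' x = φ '' (valuesAt F x) := by
    intro x
    ext y
    constructor
    · rintro ⟨⟨a, b⟩, hab, heq⟩
      rw [Prod.ext_iff] at heq
      obtain ⟨h1, h2⟩ := heq
      simp only at h1 h2
      subst h1
      exact ⟨b, hab, h2⟩
    · rintro ⟨b, hb, rfl⟩
      exact ⟨(x, b), hb, rfl⟩
  have hcusco' : IsCusco F' := by
    constructor
    · intro x V hVo hsub
      rw [hvals] at hsub
      obtain ⟨U, hUo, hxU, hU⟩ := hF.1 x (φ ⁻¹' V) (hVo.preimage hφc)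
        (fun y hy => hsub ⟨y, hy, rfl⟩)
      refine ⟨U, hUo, hxU, fun u hu => ?_⟩
      rw [hvals]
      rintro _ ⟨b, hb, rfl⟩
      exact hU u hu hb
    · intro x
      rw [hvals]
      refine ⟨(hF.2 x).1.image φ, ((hF.2 x).2.1).image hφc, ?_⟩
      have hpre : IsPreconnected (φ '' valuesAt F x) :=
        ((hF.2 x).2.2.isPreconnected).image φ hφc.continuousOn
      exact convex_iff_ordConnected.mpr hpre.ordConnected
  have hW'o : IsOpen W' := by
    have hband : IsOpen {r : X × ℝ | |r.2| < 1} :=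
      isOpen_lt continuous_snd.abs continuous_const
    have hcont : ContinuousOn (fun r : X × ℝ => (r.1, r.2 / (1 - |r.2|)))
        {r : X × ℝ | |r.2| < 1} := by
      apply ContinuousOn.prodMk continuous_fst.continuousOn
      apply ContinuousOn.div continuous_snd.continuousOn
        (continuous_const.sub continuous_snd.abs).continuousOn
      intro r hr
      have : |r.2| < 1 := hr
      exact ne_of_gt (by show (0:ℝ) < 1 - |r.2|; linarith)
    have h2 := hcont.isOpen_inter_preimage hband hW
    have heq : W' = {r : X × ℝ | |r.2| < 1} ∩
        (fun r : X × ℝ => (r.1, r.2 / (1 - |r.2|))) ⁻¹' W := rfl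
    rw [heq]
    exact h2
  have hF'W' : F' ⊆ W' := by
    rintro _ ⟨⟨a, b⟩, hab, rfl⟩
    refine ⟨hφlt b, ?_⟩
    show (a, φ b / (1 - |φ b|)) ∈ W
    rw [hψφ b]
    exact hFW hab
  have hW'b : ∀ r ∈ W', |r.2| < 1 := fun r hr => hr.1
  obtain ⟨g', hg'c, hg'⟩ := lemmaD hcusco' hW'o hF'W' hW'b
  have hb : ∀ x, |g' x| < 1 := fun x => (hg' x).1
  refine ⟨fun x => g' x / (1 - |g' x|), ?_, ?_⟩
  · exact hg'c.div (continuous_const.sub hg'c.abs) (fun x => ne_of_gt (by linarith [hb x]))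
  · rintro ⟨a, y⟩ hy
    simp only [graphOf, mem_setOf_eq] at hy
    have h2 := (hg' a).2
    show (a, y) ∈ W
    rw [hy]
    exact h2
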